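/- Let (α_n) and (β_n) be increasing sequences of reals with α_n ≤ β_n ≤ α_{n+1} for all n, α_1 > 1, and ∑_n α_n^{-λ} < ∞ for every λ > 1. Then the Euler products E_1(s) = ∏_n (1 - α_n^{-s})^{-1} and E_2(s) = ∏_n (1 - β_n^{-s})^{-1} are well-defined and analytic for Re(s) > 1, and there exists a function f(s) analytic and non-vanishing on Re(s) > 0 such that E_1(s) = E_2(s) f(s) for Re(s) > 1. -/

import Mathlib

open Complex

namespace Stmt1Aux


lemma norm_cpow_neg {x : ℝ} (hx : 0 < x) (s : ℂ) :
    ‖(x : ℂ) ^ (-s)‖ = x ^ (-s.re) := by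
  rw [Complex.norm_cpow_eq_rpow_re_of_pos hx, Complex.neg_re]

lemma norm_cpow_le {c x σ₁ : ℝ} {s : ℂ} (hc : 1 < c) (hcx : c ≤ x) (hσ : 0 < σ₁)
    (hre : σ₁ ≤ s.re) : ‖(x : ℂ) ^ (-s)‖ ≤ c ^ (-σ₁) := by
  have hx : (1:ℝ) < x := hc.trans_le hcx
  rw [norm_cpow_neg (by linarith) s]
  calc x ^ (-s.re) ≤ x ^ (-σ₁) := Real.rpow_le_rpow_of_exponent_le hx.le (by linarith)
    _ ≤ c ^ (-σ₁) := Real.rpow_le_rpow_of_nonpos (by linarith) hcx (by linarith)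

lemma norm_cpow_lt_one {x : ℝ} (hx : 1 < x) {s : ℂ} (hs : 0 < s.re) :
    ‖(x : ℂ) ^ (-s)‖ < 1 := by
  rw [norm_cpow_neg (by linarith) s]
  exact Real.rpow_lt_one_of_one_lt_of_neg hx (by linarith)

lemma one_sub_mem {z : ℂ} (hz : ‖z‖ < 1) : 1 - z ∈ Complex.slitPlane := by
  rw [Complex.mem_slitPlane_iff]
  left
  have h := Complex.abs_re_le_norm z
  have : z.re < 1 := lt_of_le_of_lt (le_trans (le_abs_self _) h) hz
  simp only [Complex.sub_re, Complex.one_re]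
  linarith

lemma one_sub_ne_zero {z : ℂ} (hz : ‖z‖ < 1) : 1 - z ≠ 0 := by
  intro h
  rw [sub_eq_zero] at h
  rw [← h] at hz
  simp at hz

lemma diffAt_log_term {x : ℝ} (hx : 1 < x) {s : ℂ} (hs : 0 < s.re) :
    DifferentiableAt ℂ (fun s : ℂ => Complex.log (1 - (x:ℂ) ^ (-s))) s := by
  have hb : ((x:ℝ) : ℂ) ≠ 0 := Complex.ofReal_ne_zero.mpr (by linarith)
  have h1 : DifferentiableAt ℂ (fun s : ℂ => (x:ℂ) ^ (-s)) s :=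
    (differentiable_neg s).const_cpow (Or.inl hb)
  exact ((differentiableAt_const (1:ℂ)).sub h1).clog (one_sub_mem (norm_cpow_lt_one hx hs))

lemma norm_log_le {z : ℂ} {r : ℝ} (hr : r < 1) (hz : ‖z‖ ≤ r) :
    ‖Complex.log (1 - z)‖ ≤ ((1 - r)⁻¹ / 2 + 1) * ‖z‖ := by
  have h0 : (0:ℝ) ≤ ‖z‖ := norm_nonneg z
  have h1 : ‖z‖ < 1 := lt_of_le_of_lt hz hr
  have H := Complex.norm_log_one_add_le (z := -z) (by simpa using h1)
  rw [← sub_eq_add_neg] at H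
  simp only [norm_neg] at H
  have hinv : (1 - ‖z‖)⁻¹ ≤ (1 - r)⁻¹ := by
    apply inv_anti₀ <;> linarith
  have hz2 : ‖z‖ ^ 2 * (1 - ‖z‖)⁻¹ / 2 ≤ (1 - r)⁻¹ / 2 * ‖z‖ := by
    have hsq : ‖z‖ ^ 2 ≤ ‖z‖ := by nlinarith
    have hinv0 : (0:ℝ) ≤ (1 - ‖z‖)⁻¹ := by
      have : (0:ℝ) < 1 - ‖z‖ := by linarith
      positivity
    have hmul : ‖z‖ ^ 2 * (1 - ‖z‖)⁻¹ ≤ ‖z‖ * (1 - r)⁻¹ := mul_le_mul hsq hinv hinv0 h0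
    linarith
  calc ‖Complex.log (1 - z)‖ ≤ ‖z‖ ^ 2 * (1 - ‖z‖)⁻¹ / 2 + ‖z‖ := H
    _ ≤ (1 - r)⁻¹ / 2 * ‖z‖ + ‖z‖ := by linarith
    _ = ((1 - r)⁻¹ / 2 + 1) * ‖z‖ := by ring




lemma log_lip {a b : ℂ} {r : ℝ} (hr : r < 1) (ha : ‖a‖ ≤ r) (hb : ‖b‖ ≤ r) :
    ‖Complex.log (1 - b) - Complex.log (1 - a)‖ ≤ (1 - r)⁻¹ * ‖b - a‖ := by
  have hr0 : (0:ℝ) ≤ r := le_trans (norm_nonneg a) ha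
  have key : ∀ w ∈ Metric.closedBall (0:ℂ) r,
      HasFDerivWithinAt (fun w => Complex.log (1 - w))
        (ContinuousLinearMap.smulRight (1 : ℂ →L[ℂ] ℂ) (-(1 - w)⁻¹)) (Metric.closedBall 0 r) w := by
    intro w hw
    have hwr : ‖w‖ ≤ r := by simpa [Metric.mem_closedBall, dist_eq_norm] using hw
    have hw1 : ‖w‖ < 1 := lt_of_le_of_lt hwr hr
    have hd : HasDerivAt (fun w : ℂ => Complex.log (1 - w)) ((-1) / (1 - w)) w := by
      have h1 : HasDerivAt (fun w : ℂ => 1 - w) (-1) w := by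
        simpa using (hasDerivAt_id w).const_sub (1:ℂ)
      exact h1.clog (one_sub_mem hw1)
    have : ((-1) / (1 - w)) = -(1 - w)⁻¹ := by rw [neg_div, one_div]
    exact (this ▸ hd).hasFDerivAt.hasFDerivWithinAt
  have bound : ∀ w ∈ Metric.closedBall (0:ℂ) r,
      ‖ContinuousLinearMap.smulRight (1 : ℂ →L[ℂ] ℂ) (-(1 - w)⁻¹)‖ ≤ (1 - r)⁻¹ := by
    intro w hw
    have hwr : ‖w‖ ≤ r := by simpa [Metric.mem_closedBall, dist_eq_norm] using hw
    rw [ContinuousLinearMap.norm_smulRight_apply, norm_one, one_mul, norm_neg,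
      norm_inv]
    have h1 : 1 - r ≤ ‖1 - w‖ := by
      have h2 := norm_sub_norm_le (1:ℂ) w
      rw [norm_one] at h2
      linarith
    exact inv_anti₀ (by linarith) h1
  have := (convex_closedBall (0:ℂ) r).norm_image_sub_le_of_norm_hasFDerivWithin_le key bound
    (by simpa [Metric.mem_closedBall, dist_eq_norm] using ha)
    (by simpa [Metric.mem_closedBall, dist_eq_norm] using hb)
  exact this

lemma hasDerivAt_cpow_real {t : ℝ} (ht : 0 < t) {s : ℂ} (hs : s ≠ 0) :
    HasDerivAt (fun t : ℝ => (t:ℂ) ^ (-s)) (-(s * (t:ℂ) ^ (-(s+1)))) t := by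
  have hr : -(s+1) ≠ -1 := by
    intro h
    apply hs
    have h2 := neg_injective h
    exact add_eq_right.mp h2
  have H := hasDerivAt_ofReal_cpow_const' (ne_of_gt ht) hr
  have hs' : -s ≠ 0 := neg_ne_zero.mpr hs
  have heq : -(s+1) + 1 = -s := by ring
  rw [heq] at H
  have H2 := H.const_mul (-s)
  have hfun : (fun t : ℝ => -s * ((t:ℂ) ^ (-s) / -s)) = fun t : ℝ => (t:ℂ) ^ (-s) := by
    funext u
    field_simp
  rw [hfun] at H2
  exact H2.congr_deriv (by ring)



lemma cpow_diff_bound {x y σ₁ M : ℝ} {s : ℂ} (hx : 1 ≤ x) (hxy : x ≤ y)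
    (hσ : 0 < σ₁) (hre : σ₁ ≤ s.re) (hM : ‖s‖ ≤ M) :
    ‖(y:ℂ) ^ (-s) - (x:ℂ) ^ (-s)‖ ≤ M / σ₁ * (x ^ (-σ₁) - y ^ (-σ₁)) := by
  have hs0 : s ≠ 0 := fun h => by rw [h] at hre; simp at hre; linarith
  have hM0 : 0 ≤ M := le_trans (norm_nonneg s) hM
  set f : ℝ → ℂ := fun t => (t:ℂ) ^ (-s) - (x:ℂ) ^ (-s) with hf
  set B : ℝ → ℝ := fun t => M / σ₁ * (x ^ (-σ₁) - t ^ (-σ₁)) with hB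
  have hd : ∀ t ∈ Set.Icc x y, HasDerivAt f (-(s * (t:ℂ) ^ (-(s+1)))) t := fun t ht => by
    have ht0 : 0 < t := lt_of_lt_of_le (by linarith) ht.1
    exact (hasDerivAt_cpow_real ht0 hs0).sub_const _
  have hBd : ∀ t ∈ Set.Icc x y, HasDerivAt B (M * t ^ (-σ₁ - 1)) t := fun t ht => by
    have ht0 : 0 < t := lt_of_lt_of_le (by linarith) ht.1
    have h1 : HasDerivAt (fun t : ℝ => t ^ (-σ₁)) (-σ₁ * t ^ (-σ₁ - 1)) t :=
      Real.hasDerivAt_rpow_const (Or.inl (ne_of_gt ht0))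
    have h2 := ((h1.const_sub (x ^ (-σ₁))).const_mul (M / σ₁))
    exact h2.congr_deriv (by rw [neg_mul, neg_neg, ← mul_assoc, div_mul_cancel₀ _ hσ.ne'])
  have key := image_norm_le_of_norm_deriv_right_le_deriv_boundary'
    (f := f) (f' := fun t => -(s * (t:ℂ) ^ (-(s+1)))) (a := x) (b := y)
    (fun t ht => (hd t ht).continuousAt.continuousWithinAt)
    (fun t ht => ((hd t (Set.mem_Icc_of_Ico ht)).hasDerivWithinAt))
    (B := B) (B' := fun t => M * t ^ (-σ₁ - 1))
    (by simp [hf, hB])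
    (fun t ht => (hBd t ht).continuousAt.continuousWithinAt)
    (fun t ht => ((hBd t (Set.mem_Icc_of_Ico ht)).hasDerivWithinAt))
    (fun t ht => by
      have ht1 : 1 ≤ t := le_trans hx ht.1
      have ht0 : 0 < t := by linarith
      rw [norm_neg, norm_mul]
      have e1 : ‖(t:ℂ) ^ (-(s+1))‖ = t ^ (-(s.re+1)) := by
        rw [norm_cpow_neg ht0]
        norm_num
      rw [e1]
      have e2 : t ^ (-(s.re+1)) ≤ t ^ (-σ₁ - 1) :=
        Real.rpow_le_rpow_of_exponent_le ht1 (by linarith)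
      have e3 : (0:ℝ) ≤ t ^ (-(s.re+1)) := Real.rpow_nonneg ht0.le _
      calc ‖s‖ * t ^ (-(s.re+1)) ≤ M * t ^ (-σ₁ - 1) :=
        mul_le_mul hM e2 e3 hM0)
  have := key (Set.right_mem_Icc.mpr hxy)
  simpa [hf, hB] using this

lemma summable_tele {γ : ℕ → ℝ} (hmono : Monotone γ) (hpos : ∀ n, 0 < γ n) {σ : ℝ}
    (hσ : 0 < σ) : Summable (fun n => γ n ^ (-σ) - γ (n+1) ^ (-σ)) := by
  apply summable_of_sum_range_le (c := γ 0 ^ (-σ))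
  · intro n
    have := Real.rpow_le_rpow_of_nonpos (hpos n) (hmono (Nat.le_succ n)) (by linarith : -σ ≤ 0)
    linarith
  · intro n
    rw [Finset.sum_range_sub' (fun n => γ n ^ (-σ))]
    have : 0 ≤ γ n ^ (-σ) := Real.rpow_nonneg (hpos n).le _
    linarith


lemma summable_cpow {γ : ℕ → ℝ} (hγpos : ∀ n, (0:ℝ) < γ n)
    (hγsum : ∀ l : ℝ, 1 < l → Summable fun n => γ n ^ (-l)) {s : ℂ} (hs : 1 < s.re) :
    Summable fun n => (γ n : ℂ) ^ (-s) := by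
  apply Summable.of_norm
  have : (fun n => ‖(γ n : ℂ) ^ (-s)‖) = fun n => γ n ^ (-s.re) := by
    funext n; exact norm_cpow_neg (hγpos n) s
  rw [this]
  exact hγsum s.re hs

lemma euler_part {c : ℝ} (hc : 1 < c) (γ : ℕ → ℝ) (hγ : ∀ n, c ≤ γ n)
    (hγsum : ∀ l : ℝ, 1 < l → Summable fun n => γ n ^ (-l)) :
    AnalyticOn ℂ (fun s => cexp (∑' n, -Complex.log (1 - (γ n:ℂ) ^ (-s)))) {s : ℂ | 1 < s.re} ∧
    ∀ s ∈ {s : ℂ | 1 < s.re}, HasProd (fun n => (1 - (γ n : ℂ) ^ (-s))⁻¹)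
      (cexp (∑' n, -Complex.log (1 - (γ n:ℂ) ^ (-s)))) := by
  have hγ1 : ∀ n, (1:ℝ) < γ n := fun n => hc.trans_le (hγ n)
  have hγpos : ∀ n, (0:ℝ) < γ n := fun n => lt_trans one_pos (hγ1 n)
  have hopen : IsOpen {s : ℂ | 1 < s.re} := isOpen_lt continuous_const Complex.continuous_re
  constructor
  · -- analyticity
    have hdiff : DifferentiableOn ℂ
        (fun s => ∑' n, -Complex.log (1 - (γ n:ℂ) ^ (-s))) {s : ℂ | 1 < s.re} := by
      intro s₀ hs₀
      have hs₀' : 1 < s₀.re := hs₀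
      set σ₁ : ℝ := (1 + s₀.re) / 2 with hσ₁def
      have hσ₁ : 1 < σ₁ := by rw [hσ₁def]; linarith
      have hσ₁0 : 0 < σ₁ := by linarith
      have hV : IsOpen {s : ℂ | σ₁ < s.re} := isOpen_lt continuous_const Complex.continuous_re
      have hmem : s₀ ∈ {s : ℂ | σ₁ < s.re} := by
        simp only [Set.mem_setOf_eq, hσ₁def]; linarith
      set r : ℝ := c ^ (-σ₁) with hrdef
      have hr1 : r < 1 := Real.rpow_lt_one_of_one_lt_of_neg hc (by linarith)
      have hr0 : 0 ≤ r := Real.rpow_nonneg (by linarith) _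
      have hC0 : 0 ≤ (1 - r)⁻¹ / 2 + 1 := by
        have : (0:ℝ) < 1 - r := by linarith
        positivity
      have hD : DifferentiableOn ℂ (fun s => ∑' n, -Complex.log (1 - (γ n:ℂ) ^ (-s)))
          {s : ℂ | σ₁ < s.re} := by
        apply differentiableOn_tsum_of_summable_norm
          (u := fun n => ((1 - r)⁻¹ / 2 + 1) * γ n ^ (-σ₁))
        · exact (hγsum σ₁ hσ₁).mul_left _
        · intro n
          intro w hw
          have hw' : σ₁ < w.re := hw
          exact ((diffAt_log_term (hγ1 n) (by linarith : 0 < w.re)).neg).differentiableWithinAt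
        · exact hV
        · intro n w hw
          have hw' : σ₁ < w.re := hw
          rw [norm_neg]
          have hz1 : ‖(γ n : ℂ) ^ (-w)‖ ≤ r := norm_cpow_le hc (hγ n) hσ₁0 hw'.le
          have hz2 : ‖(γ n : ℂ) ^ (-w)‖ ≤ γ n ^ (-σ₁) :=
            norm_cpow_le (hγ1 n) le_rfl hσ₁0 hw'.le
          calc ‖Complex.log (1 - (γ n : ℂ) ^ (-w))‖
              ≤ ((1 - r)⁻¹ / 2 + 1) * ‖(γ n : ℂ) ^ (-w)‖ := norm_log_le hr1 hz1
            _ ≤ ((1 - r)⁻¹ / 2 + 1) * γ n ^ (-σ₁) := by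
                exact mul_le_mul_of_nonneg_left hz2 hC0
      exact ((hD.differentiableAt (hV.mem_nhds hmem)).differentiableWithinAt)
    exact ((Complex.differentiable_exp.comp_differentiableOn hdiff).analyticOn hopen)
  · intro s hs
    have hs' : 1 < s.re := hs
    have hsm : Summable fun n => (γ n : ℂ) ^ (-s) := summable_cpow hγpos hγsum hs'
    have hne : ∀ n, 1 - (γ n : ℂ) ^ (-s) ≠ 0 := fun n =>
      one_sub_ne_zero (norm_cpow_lt_one (hγ1 n) (by linarith : 0 < s.re))
    have H := hsm.clog_one_sub.neg.hasSum.cexp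
    have hfun : (cexp ∘ fun n => -Complex.log (1 - (γ n:ℂ) ^ (-s)))
        = fun n => (1 - (γ n:ℂ) ^ (-s))⁻¹ := by
      funext n
      simp only [Function.comp_apply, Complex.exp_neg, Complex.exp_log (hne n)]
    rwa [hfun] at H

end Stmt1Aux

open Stmt1Aux

/-- For interlaced increasing sequences `α n ≤ β n ≤ α (n+1)` with `α 0 > 1`
and `∑ (α n)^(-λ) < ∞` for all `λ > 1`, the Euler products
`E₁(s) = ∏ (1 - α n ^ (-s))⁻¹` and `E₂(s) = ∏ (1 - β n ^ (-s))⁻¹` are well defined and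
analytic for `Re s > 1`, and `E₁ = E₂ · f` there for some analytic nonvanishing `f` on
`Re s > 0`. -/
theorem stmt1 (α β : ℕ → ℝ)
    (hαmono : StrictMono α) (hβmono : StrictMono β)
    (hinter : ∀ n, α n ≤ β n ∧ β n ≤ α (n + 1)) (hα1 : 1 < α 0)
    (hsum : ∀ l : ℝ, 1 < l → Summable fun n => (α n) ^ (-l)) :
    ∃ E₁ E₂ f : ℂ → ℂ,
      AnalyticOn ℂ E₁ {s : ℂ | 1 < s.re} ∧
      AnalyticOn ℂ E₂ {s : ℂ | 1 < s.re} ∧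
      (∀ s ∈ {s : ℂ | 1 < s.re},
        HasProd (fun n => (1 - (α n : ℂ) ^ (-s))⁻¹) (E₁ s) ∧
        HasProd (fun n => (1 - (β n : ℂ) ^ (-s))⁻¹) (E₂ s)) ∧
      AnalyticOn ℂ f {s : ℂ | 0 < s.re} ∧
      (∀ s ∈ {s : ℂ | 0 < s.re}, f s ≠ 0) ∧
      (∀ s ∈ {s : ℂ | 1 < s.re}, E₁ s = E₂ s * f s) := by
  have hα0 : ∀ n, α 0 ≤ α n := fun n => hαmono.monotone (Nat.zero_le n)
  have hα1' : ∀ n, (1:ℝ) < α n := fun n => lt_of_lt_of_le hα1 (hα0 n)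
  have hβge : ∀ n, α 0 ≤ β n := fun n => le_trans (hα0 n) (hinter n).1
  have hβ1 : ∀ n, (1:ℝ) < β n := fun n => lt_of_lt_of_le hα1 (hβge n)
  have hβsum : ∀ l : ℝ, 1 < l → Summable fun n => (β n) ^ (-l) := by
    intro l hl
    apply (hsum l hl).of_nonneg_of_le
      (fun n => Real.rpow_nonneg (by linarith [hβ1 n]) _)
      (fun n => Real.rpow_le_rpow_of_nonpos (by linarith [hα1' n]) (hinter n).1 (by linarith))
  obtain ⟨hE₁a, hE₁p⟩ := euler_part hα1 α hα0 hsum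
  obtain ⟨hE₂a, hE₂p⟩ := euler_part hα1 β hβge hβsum
  refine ⟨_, _,
    fun s => cexp (∑' n, (Complex.log (1 - (β n:ℂ) ^ (-s)) - Complex.log (1 - (α n:ℂ) ^ (-s)))),
    hE₁a, hE₂a, fun s hs => ⟨hE₁p s hs, hE₂p s hs⟩, ?_, ?_, ?_⟩
  · -- f analytic on re > 0
    have hopen : IsOpen {s : ℂ | 0 < s.re} := isOpen_lt continuous_const Complex.continuous_re
    have hdiff : DifferentiableOn ℂ
        (fun s => ∑' n, (Complex.log (1 - (β n:ℂ) ^ (-s)) - Complex.log (1 - (α n:ℂ) ^ (-s))))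
        {s : ℂ | 0 < s.re} := by
      intro s₀ hs₀
      have hσ₀ : 0 < s₀.re := hs₀
      set σ₁ : ℝ := s₀.re / 2 with hσ₁def
      have hσ₁ : 0 < σ₁ := by rw [hσ₁def]; linarith
      set M : ℝ := ‖s₀‖ + 1 with hMdef
      have hM0 : 0 ≤ M := by have := norm_nonneg s₀; rw [hMdef]; linarith
      set r : ℝ := α 0 ^ (-σ₁) with hrdef
      have hr1 : r < 1 := Real.rpow_lt_one_of_one_lt_of_neg hα1 (by linarith)
      have hr0 : 0 ≤ r := Real.rpow_nonneg (by linarith) _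
      have hir0 : 0 ≤ (1 - r)⁻¹ := by
        have : (0:ℝ) < 1 - r := by linarith
        positivity
      set V : Set ℂ := {s : ℂ | σ₁ < s.re} ∩ Metric.ball s₀ 1 with hVdef
      have hVopen : IsOpen V :=
        (isOpen_lt continuous_const Complex.continuous_re).inter Metric.isOpen_ball
      have hmem : s₀ ∈ V := ⟨by simp only [Set.mem_setOf_eq]; linarith,
        Metric.mem_ball_self one_pos⟩
      have hD : DifferentiableOn ℂ
          (fun s => ∑' n, (Complex.log (1 - (β n:ℂ) ^ (-s)) - Complex.log (1 - (α n:ℂ) ^ (-s)))) V := by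
        apply differentiableOn_tsum_of_summable_norm
          (u := fun n => (1 - r)⁻¹ * (M / σ₁) * (α n ^ (-σ₁) - α (n+1) ^ (-σ₁)))
        · exact (summable_tele hαmono.monotone (fun n => by linarith [hα1' n]) hσ₁).mul_left _
        · intro n w hw
          have hw1 : σ₁ < w.re := hw.1
          have hw0 : 0 < w.re := by linarith
          exact ((diffAt_log_term (hβ1 n) hw0).sub (diffAt_log_term (hα1' n) hw0)).differentiableWithinAt
        · exact hVopen
        · intro n w hw
          have hw1 : σ₁ < w.re := hw.1
          have hwM : ‖w‖ ≤ M := by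
            have h2 : dist w s₀ < 1 := hw.2
            rw [dist_eq_norm] at h2
            have := norm_sub_norm_le w s₀
            rw [hMdef]; linarith
          have ha : ‖(α n : ℂ) ^ (-w)‖ ≤ r := norm_cpow_le hα1 (hα0 n) hσ₁ hw1.le
          have hb : ‖(β n : ℂ) ^ (-w)‖ ≤ r := norm_cpow_le hα1 (hβge n) hσ₁ hw1.le
          have h3 : ‖(β n:ℂ) ^ (-w) - (α n:ℂ) ^ (-w)‖ ≤ M / σ₁ * (α n ^ (-σ₁) - β n ^ (-σ₁)) :=
            cpow_diff_bound (by linarith [hα1' n]) (hinter n).1 hσ₁ hw1.le hwM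
          have h4 : β n ^ (-σ₁) ≥ α (n+1) ^ (-σ₁) :=
            Real.rpow_le_rpow_of_nonpos (by linarith [hβ1 n]) (hinter n).2 (by linarith)
          have h5 : M / σ₁ * (α n ^ (-σ₁) - β n ^ (-σ₁)) ≤ M / σ₁ * (α n ^ (-σ₁) - α (n+1) ^ (-σ₁)) := by
            apply mul_le_mul_of_nonneg_left _ (by positivity)
            linarith
          calc ‖Complex.log (1 - (β n:ℂ) ^ (-w)) - Complex.log (1 - (α n:ℂ) ^ (-w))‖
              ≤ (1 - r)⁻¹ * ‖(β n:ℂ) ^ (-w) - (α n:ℂ) ^ (-w)‖ := log_lip hr1 ha hb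
            _ ≤ (1 - r)⁻¹ * (M / σ₁ * (α n ^ (-σ₁) - α (n+1) ^ (-σ₁))) :=
                mul_le_mul_of_nonneg_left (le_trans h3 h5) hir0
            _ = (1 - r)⁻¹ * (M / σ₁) * (α n ^ (-σ₁) - α (n+1) ^ (-σ₁)) := by ring
      exact ((hD.differentiableAt (hVopen.mem_nhds hmem)).differentiableWithinAt)
    exact ((Complex.differentiable_exp.comp_differentiableOn hdiff).analyticOn hopen)
  · intro s _
    exact Complex.exp_ne_zero _
  · intro s hs
    have hs' : 1 < s.re := hs
    have hA : Summable fun n => Complex.log (1 - (α n:ℂ) ^ (-s)) :=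
      (summable_cpow (fun n => by linarith [hα1' n]) hsum hs').clog_one_sub
    have hB : Summable fun n => Complex.log (1 - (β n:ℂ) ^ (-s)) :=
      (summable_cpow (fun n => by linarith [hβ1 n]) hβsum hs').clog_one_sub
    have h1 : ∑' n, -Complex.log (1 - (α n:ℂ) ^ (-s))
        = (∑' n, -Complex.log (1 - (β n:ℂ) ^ (-s)))
          + ∑' n, (Complex.log (1 - (β n:ℂ) ^ (-s)) - Complex.log (1 - (α n:ℂ) ^ (-s))) := by
      rw [← Summable.tsum_add hB.neg (hB.sub hA)]
      exact tsum_congr fun n => by ring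
    rw [h1, Complex.exp_add]
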